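/- Let G be a finite group with normal subgroups N ≤ M, primes p ≠ q, and P ∈ Syl_p(G), Q ∈ Syl_q(G) such that G = MP, M = NQ, and (G, P, P ∩ M) and (M, Q, Q ∩ N) are Frobenius-Wielandt triples. If O^p(N) < N (the smallest normal subgroup of N with p-group quotient is proper), then G/O^p(N) is a 2-Frobenius group. -/

import Mathlib

open Subgroup

/-- `C` is a Frobenius complement in the ambient group: `1 < C < G` and
`C ∩ C^x = 1` for all `x ∉ C`. -/
def IsFrobeniusComplementIn {X : Type*} [Group X] (C : Subgroup X) : Prop :=
  ⊥ < C ∧ C < ⊤ ∧ ∀ x : X, x ∉ C → C ⊓ C.map (MulAut.conj x).toMonoidHom = ⊥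

/-- `X` is a Frobenius group. -/
def IsFrobeniusGroup (X : Type*) [Group X] : Prop :=
  ∃ C : Subgroup X, IsFrobeniusComplementIn C

/-- `K` is the Frobenius kernel of the ambient group: `K` is a proper nontrivial
normal subgroup admitting a Frobenius complement `C` with `X = K ⋊ C`. -/
def IsFrobeniusKernelIn {X : Type*} [Group X] (K : Subgroup X) : Prop :=
  K.Normal ∧ ⊥ < K ∧ K < ⊤ ∧ ∃ C : Subgroup X,
    (∀ x : X, x ∉ C → C ⊓ C.map (MulAut.conj x).toMonoidHom = ⊥) ∧
    K ⊔ C = ⊤ ∧ K ⊓ C = ⊥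

/-- `(X, H, L)` is a Frobenius–Wielandt triple: `L ⊴ H`, `L < H < X`, and
`H ∩ H^g ≤ L` for all `g ∉ H`. -/
def IsFWTriple {X : Type*} [Group X] (H L : Subgroup X) : Prop :=
  L ≤ H ∧ (L.subgroupOf H).Normal ∧ L < H ∧ H < ⊤ ∧
    ∀ g : X, g ∉ H → H ⊓ H.map (MulAut.conj g).toMonoidHom ≤ L

/-- `X` is a 2-Frobenius group: there are normal subgroups `K < L < X` with
`X/K` a Frobenius group with kernel `L/K` and `L` a Frobenius group with kernel `K`. -/
def Is2FrobeniusGroup (X : Type*) [Group X] : Prop :=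
  ∃ (K L : Subgroup X) (hK : K.Normal), L.Normal ∧ ⊥ < K ∧ K < L ∧ L < ⊤ ∧
    (@IsFrobeniusKernelIn _ (@QuotientGroup.Quotient.group X _ K hK)
      (L.map (@QuotientGroup.mk' X _ K hK))) ∧
    IsFrobeniusKernelIn (K.subgroupOf L)
/-- The `p`-residual `O^p(X)`: the smallest normal subgroup of `X` whose
quotient is a `p`-group (for finite `X`, `X/K` is a `p`-group iff some
`p`-power power of every element lies in `K`). -/
def pResidual (p : ℕ) (X : Type*) [Group X] : Subgroup X :=
  ⨅ K ∈ {K : Subgroup X | K.Normal ∧ ∃ n : ℕ, ∀ g : X, g ^ p ^ n ∈ K}, K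

open Pointwise

section Helpers

variable {G : Type*} [Group G]

lemma conj_map_eq_smul (H : Subgroup G) (g : G) :
    H.map (MulAut.conj g).toMonoidHom = MulAut.conj g • H := by
  ext x
  constructor
  · rintro ⟨v, hv, rfl⟩
    exact Subgroup.smul_mem_pointwise_smul v _ H hv
  · intro h
    have h2 := Subgroup.mem_pointwise_smul_iff_inv_smul_mem.mp h
    exact ⟨(MulAut.conj g)⁻¹ • x, h2, by simp; group⟩

lemma pow_gcd_mem {K : Subgroup G} {x : G} {m n : ℕ} (hm : x ^ m ∈ K) (hn : x ^ n ∈ K) :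
    x ^ (Nat.gcd m n) ∈ K := by
  have h := Nat.gcd_eq_gcd_ab m n
  have hx : (x : G) ^ ((Nat.gcd m n : ℤ)) = (x ^ (m : ℤ)) ^ (Nat.gcdA m n) *
      (x ^ (n : ℤ)) ^ (Nat.gcdB m n) := by
    rw [← zpow_mul, ← zpow_mul, ← zpow_add, h]
  have hmem : x ^ ((Nat.gcd m n : ℤ)) ∈ K := by
    rw [hx]
    exact mul_mem (zpow_mem (by rwa [zpow_natCast]) _) (zpow_mem (by rwa [zpow_natCast]) _)
  rwa [zpow_natCast] at hmem

lemma coprime_pow_mem {K : Subgroup G} {x : G} {m n : ℕ} (h : Nat.Coprime m n)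
    (hm : x ^ m ∈ K) (hn : x ^ n ∈ K) : x ∈ K := by
  have := pow_gcd_mem hm hn
  rwa [Nat.Coprime.gcd_eq_one h, pow_one] at this


lemma pow_pow_card_mem [Fintype G] {r : ℕ} (hr : r.Prime) {x : G} {K : Subgroup G} {k : ℕ}
    (h : x ^ r ^ k ∈ K) : x ^ r ^ (Fintype.card G) ∈ K := by
  have hgcd : x ^ (Nat.gcd (r ^ k) (orderOf x)) ∈ K :=
    pow_gcd_mem h (by rw [pow_orderOf_eq_one]; exact one_mem K)
  obtain ⟨a, ha, hda⟩ := (Nat.dvd_prime_pow hr).mp (Nat.gcd_dvd_left (r ^ k) (orderOf x))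
  have hdvd : Nat.gcd (r ^ k) (orderOf x) ∣ orderOf x := Nat.gcd_dvd_right _ _
  have hordpos : 0 < orderOf x := orderOf_pos x
  have hdle : Nat.gcd (r ^ k) (orderOf x) ≤ orderOf x := Nat.le_of_dvd hordpos hdvd
  have hcard : orderOf x ≤ Fintype.card G := orderOf_le_card_univ
  rw [hda] at hdle
  have haled : a < r ^ a := (Nat.lt_pow_self hr.one_lt : a < r ^ a)
  have hale : a ≤ Fintype.card G := by omega
  have hxe : x ^ r ^ Fintype.card G = (x ^ Nat.gcd (r ^ k) (orderOf x)) ^ (r ^ (Fintype.card G - a)) := by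
    rw [hda, ← pow_mul, ← pow_add, Nat.add_sub_cancel' hale]
  rw [hxe]
  exact pow_mem hgcd _

lemma sylow_step {p : ℕ} [Fact p.Prime] [Finite G] (P : Sylow p G) (R : Subgroup G) [R.Normal]
    {g u : G} (hu : u ∈ P)
    (hS : u ∈ (P : Subgroup G).map (MulAut.conj g).toMonoidHom ⊔ R) :
    ∃ s ∈ (P : Subgroup G).map (MulAut.conj g).toMonoidHom ⊔ R,
      u ∈ (P : Subgroup G).map (MulAut.conj (s * g)).toMonoidHom := by
  set S := (P : Subgroup G).map (MulAut.conj g).toMonoidHom ⊔ R with hSdef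
  have hgP : ((g • P : Sylow p G) : Subgroup G)
      = (P : Subgroup G).map (MulAut.conj g).toMonoidHom := by
    rw [conj_map_eq_smul]; rfl
  have hgPS : ((g • P : Sylow p G) : Subgroup G) ≤ S := by
    rw [hgP]; exact le_sup_left
  let A : Sylow p ↥S := (g • P).subtype hgPS
  have huS : u ∈ S := hS
  obtain ⟨k, hk⟩ := P.isPGroup' ⟨u, hu⟩
  have hk' : u ^ p ^ k = 1 := by
    have := congrArg (Subtype.val) hk
    simpa using this
  have hx1 : (⟨u, huS⟩ : ↥S) ^ p ^ k = 1 := by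
    apply Subtype.ext
    simpa using hk'
  have hpg : IsPGroup p (Subgroup.zpowers (⟨u, huS⟩ : ↥S)) := by
    rintro ⟨y, hy⟩
    obtain ⟨n, rfl⟩ := Subgroup.mem_zpowers_iff.mp hy
    refine ⟨k, ?_⟩
    have hz : ((⟨u, huS⟩ : ↥S) ^ (n : ℤ)) ^ (p ^ k) = 1 := by
      rw [← zpow_natCast ((⟨u, huS⟩ : ↥S) ^ (n : ℤ)), ← zpow_mul, mul_comm, zpow_mul,
        zpow_natCast, hx1, one_zpow]
    apply Subtype.ext
    rw [SubmonoidClass.coe_pow, OneMemClass.coe_one]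
    exact hz
  obtain ⟨B, hB⟩ := hpg.exists_le_sylow
  obtain ⟨s, hs⟩ := MulAction.exists_smul_eq ↥S A B
  have hub : (⟨u, huS⟩ : ↥S) ∈ B := hB (Subgroup.mem_zpowers _)
  rw [← hs] at hub
  have hub2 : (⟨u, huS⟩ : ↥S) ∈ MulAut.conj s • (A : Subgroup ↥S) := by
    rw [← Sylow.coe_subgroup_smul]; exact hub
  have hub3 := Subgroup.mem_pointwise_smul_iff_inv_smul_mem.mp hub2
  have hub4 : ((MulAut.conj s)⁻¹ • (⟨u, huS⟩ : ↥S) : ↥S) ∈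
      ((g • P : Sylow p G) : Subgroup G).subgroupOf S := by
    rw [← Sylow.coe_subtype]; exact hub3
  rw [Subgroup.mem_subgroupOf] at hub4
  have hub5 : (s : G)⁻¹ * u * s ∈ (P : Subgroup G).map (MulAut.conj g).toMonoidHom := by
    rw [← hgP]
    exact hub4
  obtain ⟨v, hv, hveq⟩ := hub5
  refine ⟨(s : G), s.2, v, hv, ?_⟩
  simp only [MulEquiv.coe_toMonoidHom, MulAut.conj_apply] at hveq ⊢
  have hgoal : (s : G) * (g * v * g⁻¹) * (s : G)⁻¹ = u := by rw [hveq]; group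
  rw [← hgoal]; group


lemma key {p : ℕ} [Fact p.Prime] [Finite G] (P : Sylow p G) (N : Subgroup G) [N.Normal]
    (hP : ∀ g : G, g ∉ P →
      (P : Subgroup G) ⊓ (P : Subgroup G).map (MulAut.conj g).toMonoidHom ≤ N)
    {g u : G} (hg : g ∉ (P : Subgroup G) ⊔ N) (hu : u ∈ P)
    (huc : u ∈ (P : Subgroup G).map (MulAut.conj g).toMonoidHom ⊔ N) :
    u ∈ N := by
  obtain ⟨s, hsS, hus⟩ := sylow_step P N hu huc
  by_cases hsg : s * g ∈ P
  · exfalso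
    apply hg
    have hset : s ∈ ((P : Subgroup G).map (MulAut.conj g).toMonoidHom : Set G) * (N : Set G) := by
      rw [← Subgroup.mul_normal]; exact hsS
    obtain ⟨s1, hs1, n, hn, hprod⟩ := hset
    obtain ⟨w, hw, hs1eq⟩ := hs1
    simp only [MulEquiv.coe_toMonoidHom, MulAut.conj_apply] at hs1eq
    have key_eq : g = ((s * g) * w⁻¹) * (w * (g⁻¹ * n⁻¹ * g) * w⁻¹) := by
      rw [← hprod, ← hs1eq]; group
    rw [key_eq]
    refine mul_mem ?_ ?_
    · exact (le_sup_left : (P : Subgroup G) ≤ _) (mul_mem hsg (inv_mem hw))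
    · refine (le_sup_right : N ≤ _) ?_
      have h1 : g⁻¹ * n⁻¹ * g ∈ N := by
        have := (‹N.Normal›).conj_mem n⁻¹ (inv_mem hn) g⁻¹
        simpa using this
      have := (‹N.Normal›).conj_mem _ h1 w
      simpa [mul_assoc] using this
  · exact hP (s * g) hsg ⟨hu, hus⟩

lemma frobKernel [Finite G] {Y : Type*} [Group Y] {p : ℕ} [Fact p.Prime]
    (σ : G →* Y) (hσ : Function.Surjective σ)
    (P : Sylow p G) (Mr Nr : Subgroup G) [Mr.Normal] [Nr.Normal]
    (hker : σ.ker = Nr) (hNM : Nr ≤ Mr)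
    (hup : Mr ⊔ (P : Subgroup G) = ⊤)
    (hPM : (P : Subgroup G) ⊓ Mr ≤ Nr)
    (hP : ∀ g : G, g ∉ P →
      (P : Subgroup G) ⊓ (P : Subgroup G).map (MulAut.conj g).toMonoidHom ≤ Nr)
    (hMN : ∃ m ∈ Mr, m ∉ Nr) (hMtop : ∃ g, g ∉ Mr) :
    IsFrobeniusKernelIn (Mr.map σ) := by
  have hσ1 : ∀ m : G, σ m = 1 → m ∈ Nr := by
    intro m h
    rw [← hker]
    exact h
  have hpre : ∀ (H : Subgroup G), Nr ≤ H → ∀ x : G, σ x ∈ H.map σ → x ∈ H := by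
    intro H hH x hx
    obtain ⟨h, hh, hhx⟩ := hx
    have hk : h⁻¹ * x ∈ Nr := by
      apply hσ1
      rw [map_mul, map_inv, hhx]
      group
    have := mul_mem hh (hH hk)
    simpa using this
  obtain ⟨m0, hm0, hm0n⟩ := hMN
  obtain ⟨g0, hg0⟩ := hMtop
  refine ⟨Subgroup.Normal.map ‹Mr.Normal› σ hσ, ?_, ?_, (P : Subgroup G).map σ, ?_, ?_, ?_⟩
  · refine SetLike.lt_iff_le_and_exists.mpr ⟨bot_le, σ m0, Subgroup.mem_map_of_mem σ hm0, ?_⟩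
    rw [Subgroup.mem_bot]
    intro h
    exact hm0n (hσ1 _ h)
  · refine SetLike.lt_iff_le_and_exists.mpr ⟨le_top, σ g0, Subgroup.mem_top _, ?_⟩
    intro h
    exact hg0 (hpre Mr hNM g0 h)
  · intro x hx
    rw [eq_bot_iff]
    rintro y ⟨hy1, hy2⟩
    obtain ⟨g, rfl⟩ := hσ x
    obtain ⟨u, hu, rfl⟩ := hy1
    have hcomm : (((P : Subgroup G).map σ).map (MulAut.conj (σ g)).toMonoidHom)
        = (((P : Subgroup G).map (MulAut.conj g).toMonoidHom).map σ) := by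
      rw [Subgroup.map_map, Subgroup.map_map]
      congr 1
      ext z
      simp [MulAut.conj_apply]
    rw [hcomm] at hy2
    have hgP : g ∉ (P : Subgroup G) ⊔ Nr := by
      intro hgPN
      apply hx
      have hset : g ∈ ((P : Subgroup G) : Set G) * (Nr : Set G) := by
        rw [← Subgroup.mul_normal]; exact hgPN
      obtain ⟨a, ha, n, hn, hprod⟩ := hset
      refine ⟨a, ha, ?_⟩
      have hσn : σ n = 1 := by rw [← hker] at hn; exact hn
      rw [← hprod, map_mul, hσn, mul_one]
    have huc : u ∈ (P : Subgroup G).map (MulAut.conj g).toMonoidHom ⊔ Nr := by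
      refine hpre _ le_sup_right u ?_
      exact Subgroup.map_mono (le_sup_left) hy2
    have hun : u ∈ Nr := key P Nr hP hgP hu huc
    rw [Subgroup.mem_bot, ← hker] at *
    exact hun
  · rw [← Subgroup.map_sup, hup]
    exact Subgroup.map_top_of_surjective σ hσ
  · rw [eq_bot_iff]
    rintro y ⟨hy1, hy2⟩
    obtain ⟨u, hu, rfl⟩ := hy2
    have hum : u ∈ Mr := hpre Mr hNM u hy1
    have : u ∈ Nr := hPM ⟨hu, hum⟩
    rw [Subgroup.mem_bot]
    rw [← hker] at this
    exact this

end Helpers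


theorem stmt_10 {G : Type*} [Group G] [Fintype G] (N M : Subgroup G)
    [N.Normal] [M.Normal] (hNM : N ≤ M)
    {p q : ℕ} [Fact p.Prime] [Fact q.Prime] (hpq : p ≠ q)
    (P : Sylow p G) (Q : Sylow q G)
    (hG : M ⊔ (P : Subgroup G) = ⊤) (hM : N ⊔ (Q : Subgroup G) = M)
    (h1 : IsFWTriple (P : Subgroup G) ((P : Subgroup G) ⊓ M))
    (h2 : IsFWTriple ((Q : Subgroup G).subgroupOf M)
      (((Q : Subgroup G) ⊓ N).subgroupOf M))
    [((pResidual p ↥N).map N.subtype).Normal]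
    (hres : (pResidual p ↥N).map N.subtype < N) :
    Is2FrobeniusGroup (G ⧸ (pResidual p ↥N).map N.subtype) := by
  classical
  set R := (pResidual p ↥N).map N.subtype with hRdef
  have hRN : R ≤ N := Subgroup.map_subtype_le _
  set π := QuotientGroup.mk' R with hπdef
  have hπsurj : Function.Surjective π := QuotientGroup.mk'_surjective R
  have hπker : ∀ x : G, π x = 1 ↔ x ∈ R := by
    intro x
    rw [← MonoidHom.mem_ker, QuotientGroup.ker_mk']
  have hpre : ∀ (H : Subgroup G), R ≤ H → ∀ x : G, π x ∈ H.map π → x ∈ H := by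
    intro H hH x hx
    obtain ⟨h, hh, hhx⟩ := hx
    have hk : h⁻¹ * x ∈ R := by
      rw [← hπker]
      rw [map_mul, map_inv, hhx]
      group
    have := mul_mem hh (hH hk)
    simpa using this
  have hQM : (Q : Subgroup G) ≤ M := hM ▸ le_sup_right
  haveI : Fintype ↥N := Fintype.ofFinite _
  -- N/R is a p-group
  have hNp : ∀ g ∈ N, g ^ p ^ (Fintype.card ↥N) ∈ R := by
    intro g hg
    have hmem : (⟨g, hg⟩ : ↥N) ^ p ^ (Fintype.card ↥N) ∈ pResidual p ↥N := by
      have : ∀ K ∈ {K : Subgroup ↥N | K.Normal ∧ ∃ n : ℕ, ∀ g : ↥N, g ^ p ^ n ∈ K},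
          (⟨g, hg⟩ : ↥N) ^ p ^ (Fintype.card ↥N) ∈ K := by
        rintro K ⟨hKn, n, hn⟩
        exact pow_pow_card_mem (Fact.out : p.Prime) (hn ⟨g, hg⟩)
      simp only [pResidual, Subgroup.mem_iInf]
      exact fun K hK => this K hK
    exact Subgroup.mem_map.mpr ⟨_, hmem, by simp⟩
  have hQpow : ∀ u ∈ (Q : Subgroup G), u ^ q ^ (Fintype.card G) = 1 := by
    intro u hu
    obtain ⟨k, hk⟩ := Q.isPGroup' ⟨u, hu⟩
    have hk' : u ^ q ^ k = 1 := by
      have := congrArg (Subtype.val) hk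
      simpa using this
    have : u ^ q ^ k ∈ (⊥ : Subgroup G) := by rw [Subgroup.mem_bot]; exact hk'
    have := pow_pow_card_mem (Fact.out : q.Prime) this
    rwa [Subgroup.mem_bot] at this
  have hPpow : ∀ u ∈ (P : Subgroup G), u ^ p ^ (Fintype.card G) = 1 := by
    intro u hu
    obtain ⟨k, hk⟩ := P.isPGroup' ⟨u, hu⟩
    have hk' : u ^ p ^ k = 1 := by
      have := congrArg (Subtype.val) hk
      simpa using this
    have : u ^ p ^ k ∈ (⊥ : Subgroup G) := by rw [Subgroup.mem_bot]; exact hk'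
    have := pow_pow_card_mem (Fact.out : p.Prime) this
    rwa [Subgroup.mem_bot] at this
  have hcop : ∀ a b : ℕ, Nat.Coprime (p ^ a) (q ^ b) :=
    fun a b => Nat.Coprime.pow a b ((Nat.coprime_primes Fact.out Fact.out).mpr hpq)
  have hQNR : (Q : Subgroup G) ⊓ N ≤ R := by
    rintro u ⟨huQ, huN⟩
    refine coprime_pow_mem (m := p ^ Fintype.card ↥N) (n := q ^ Fintype.card G)
      (hcop _ _) (hNp u huN) ?_
    rw [hQpow u huQ]
    exact one_mem R
  have hMq : ∀ m ∈ M, m ^ q ^ Fintype.card G ∈ N := by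
    intro m hm
    have hset : m ∈ (N : Set G) * ((Q : Subgroup G) : Set G) := by
      rw [← Subgroup.normal_mul, hM]
      exact hm
    obtain ⟨n, hn, u, hu, hprod⟩ := hset
    have h1 : (QuotientGroup.mk' N) n = 1 := by
      rw [← MonoidHom.mem_ker, QuotientGroup.ker_mk']
      exact hn
    have : (QuotientGroup.mk' N) (m ^ q ^ Fintype.card G) = 1 := by
      rw [map_pow, ← hprod, map_mul, h1, one_mul, ← map_pow, hQpow u hu, map_one]
    rwa [← MonoidHom.mem_ker, QuotientGroup.ker_mk'] at this
  have hPMN : (P : Subgroup G) ⊓ M ≤ N := by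
    rintro u ⟨huP, huM⟩
    refine coprime_pow_mem (m := p ^ Fintype.card G) (n := q ^ Fintype.card G)
      (hcop _ _) ?_ (hMq u huM)
    rw [hPpow u huP]
    exact one_mem N
  -- elements witnessing strict inclusions
  obtain ⟨x2, hx2Q, hx2n⟩ := SetLike.exists_of_lt h2.2.2.1
  rw [Subgroup.mem_subgroupOf] at hx2Q
  have hm0 : (x2 : G) ∈ M := x2.2
  have hm0N : (x2 : G) ∉ N := by
    intro h
    exact hx2n (by rw [Subgroup.mem_subgroupOf]; exact ⟨hx2Q, h⟩)
  obtain ⟨u1, hu1P, hu1⟩ := SetLike.exists_of_lt h1.2.2.1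
  have hg0 : u1 ∉ M := fun h => hu1 ⟨hu1P, h⟩
  obtain ⟨nn, hnnN, hnnR⟩ := SetLike.exists_of_lt hres
  -- the two normal subgroups of the quotient
  haveI hKn : (N.map π).Normal := Subgroup.Normal.map ‹N.Normal› π hπsurj
  haveI hLn : (M.map π).Normal := Subgroup.Normal.map ‹M.Normal› π hπsurj
  refine ⟨N.map π, M.map π, hKn, hLn, ?_, ?_, ?_, ?_, ?_⟩
  · refine SetLike.lt_iff_le_and_exists.mpr ⟨bot_le, π nn, Subgroup.mem_map_of_mem π hnnN, ?_⟩
    rw [Subgroup.mem_bot, hπker]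
    exact hnnR
  · refine SetLike.lt_iff_le_and_exists.mpr
      ⟨Subgroup.map_mono hNM, π x2, Subgroup.mem_map_of_mem π hm0, ?_⟩
    intro h
    exact hm0N (hpre N hRN _ h)
  · refine SetLike.lt_iff_le_and_exists.mpr ⟨le_top, π u1, Subgroup.mem_top _, ?_⟩
    intro h
    exact hg0 (hpre M (hRN.trans hNM) u1 h)
  · -- upper quotient is Frobenius with kernel M/N
    have hmm := Subgroup.map_map M (QuotientGroup.mk' (N.map π)) π
    rw [hmm]
    have hkerσ : ((QuotientGroup.mk' (N.map π)).comp π).ker = N := by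
      ext x
      rw [MonoidHom.mem_ker, MonoidHom.comp_apply, ← MonoidHom.mem_ker,
        QuotientGroup.ker_mk']
      constructor
      · intro h
        exact hpre N hRN x h
      · intro h
        exact Subgroup.mem_map_of_mem π h
    refine frobKernel ((QuotientGroup.mk' (N.map π)).comp π)
      ((QuotientGroup.mk'_surjective _).comp hπsurj) P M N hkerσ hNM hG hPMN ?_
      ⟨(x2 : G), hm0, hm0N⟩ ⟨u1, hg0⟩
    intro g hg
    exact (h1.2.2.2.2 g hg).trans hPMN
  · -- lower group M/R is Frobenius with kernel N/R
    have heq : ((N.subgroupOf M).map (π.subgroupMap M)) = (N.map π).subgroupOf (M.map π) := by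
      ext x
      rw [Subgroup.mem_subgroupOf]
      constructor
      · rintro ⟨y, hy, rfl⟩
        have hy' : (y : G) ∈ N := hy
        exact ⟨(y : G), hy', rfl⟩
      · rintro ⟨n, hn, heq2⟩
        have hn' : (⟨n, hNM hn⟩ : ↥M) ∈ N.subgroupOf M := hn
        refine ⟨⟨n, hNM hn⟩, hn', ?_⟩
        apply Subtype.ext
        exact heq2
    rw [← heq]
    have hkerσ2 : (π.subgroupMap M).ker = R.subgroupOf M := by
      ext x
      rw [MonoidHom.mem_ker, Subgroup.mem_subgroupOf, ← hπker]
      constructor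
      · intro h
        exact congrArg Subtype.val h
      · intro h
        exact Subtype.ext h
    refine frobKernel (π.subgroupMap M) (π.subgroupMap_surjective M)
      (Q.subtype hQM) (N.subgroupOf M) (R.subgroupOf M) hkerσ2 ?_ ?_ ?_ ?_ ?_ ?_
    · intro x hx
      rw [Subgroup.mem_subgroupOf] at *
      exact hRN hx
    · rw [eq_top_iff]
      intro x _
      have hx : (x : G) ∈ (N : Set G) * ((Q : Subgroup G) : Set G) := by
        rw [← Subgroup.normal_mul, hM]
        exact x.2
      obtain ⟨n, hn, u, hu, hprod⟩ := hx
      have hxeq : x = (⟨n, hNM hn⟩ : ↥M) * ⟨u, hQM hu⟩ := by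
        apply Subtype.ext
        simp [← hprod]
      rw [hxeq]
      refine mul_mem ((le_sup_left : N.subgroupOf M ≤ _) ?_)
        ((le_sup_right : ((Q.subtype hQM : Sylow q ↥M) : Subgroup ↥M) ≤ _) ?_)
      · rw [Subgroup.mem_subgroupOf]
        exact hn
      · rw [Sylow.coe_subtype, Subgroup.mem_subgroupOf]
        exact hu
    · rintro x ⟨hxQ, hxN⟩
      have h1x : (x : G) ∈ (Q : Subgroup G) := hxQ
      have h2x : (x : G) ∈ N := hxN
      have : (x : G) ∈ R := hQNR ⟨h1x, h2x⟩
      exact this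
    · intro g hg
      have hg' : g ∉ (Q : Subgroup G).subgroupOf M := hg
      refine le_trans (h2.2.2.2.2 g hg') ?_
      intro x hx
      have hx' : (x : G) ∈ (Q : Subgroup G) ⊓ N := hx
      have : (x : G) ∈ R := hQNR hx'
      exact this
    · refine ⟨⟨nn, hNM hnnN⟩, ?_, ?_⟩
      · have : (⟨nn, hNM hnnN⟩ : ↥M) ∈ N.subgroupOf M := hnnN
        exact this
      · intro hmem
        exact hnnR (by exact hmem)
    · refine ⟨x2, ?_⟩
      intro hmem
      exact hm0N (by exact hmem)
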